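/- Let K : S × S → ℝ be a bounded symmetric measurable kernel, G a probability measure on S, and u : S → ℝ^p a bounded measurable function with ∫ u dG = 0 and J = ∫ u uᵀ dG invertible. Define P*(x,y) = u*(x)ᵀ (J*)^{-1} u*(y) with u*(x) = (1, u(x)ᵀ)ᵀ and J* = ∫ u* u*ᵀ dG, and let the score-centered kernel be K_{scen(G)}(x,y) = K(x,y) − ∫ P*(x,z) K(z,y) dG(z) − ∫ K(x,z) P*(z,y) dG(z) + ∬ P*(x,z) K(z,w) P*(w,y) dG(z) dG(w). If x_1,…,x_n ∈ S satisfy the score equation Σ_{i=1}^n u(x_i) = 0, then Σ_{i=1}^n Σ_{j=1}^n K_{scen(G)}(x_i, x_j) = Σ_{i=1}^n Σ_{j=1}^n K_{cen(G)}(x_i, x_j); equivalently, with F̂ the empirical measure of x_1,…,x_n, d_K(F̂, G) = ∬ K_{scen(G)}(x,y) dF̂(x) dF̂(y). -/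

import Mathlib

open MeasureTheory Matrix

/-- The quadratic distance d_K(F,G) = ∬ K(s,t) d(F−G)(s) d(F−G)(t), written as the
iterated integral of s ↦ ∫ K(s,t) d(F−G)(t) against the signed measure F−G. -/
noncomputable def quadDist {S : Type*} [MeasurableSpace S] (K : S → S → ℝ)
    (F G : Measure S) : ℝ :=
  (∫ s, (∫ t, K s t ∂F - ∫ t, K s t ∂G) ∂F) - ∫ s, (∫ t, K s t ∂F - ∫ t, K s t ∂G) ∂G

/-- The G-centered kernel
K_{cen(G)}(x,y) = K(x,y) − K(x,G) − K(G,y) + K(G,G). -/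
noncomputable def kcen {S : Type*} [MeasurableSpace S] (K : S → S → ℝ) (G : Measure S)
    (x y : S) : ℝ :=
  K x y - ∫ t, K x t ∂G - ∫ s, K s y ∂G + ∫ s, ∫ t, K s t ∂G ∂G

/-- The empirical measure of x_1,…,x_n, assigning mass 1/n to each observation. -/
noncomputable def empiricalMeasure {S : Type*} [MeasurableSpace S] (n : ℕ)
    (x : Fin n → S) : Measure S :=
  ((n : ENNReal))⁻¹ • ∑ j, Measure.dirac (x j)

/-- The extended score vector u*(x) = (1, u(x)ᵀ)ᵀ. -/
def extScore {p : ℕ} (u : Fin p → ℝ) : Fin (p + 1) → ℝ := Fin.cons 1 u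

private lemma bdd_integrable {S : Type*} [MeasurableSpace S] {G : Measure S} [IsFiniteMeasure G]
    {f : S → ℝ} (hm : Measurable f) (C : ℝ) (hb : ∀ x, |f x| ≤ C) : Integrable f G :=
  ⟨hm.aestronglyMeasurable, HasFiniteIntegral.of_bounded (C := C)
    (ae_of_all _ fun x => by simpa [Real.norm_eq_abs] using hb x)⟩

private lemma abs_int_le {S : Type*} [MeasurableSpace S] (G : Measure S) [IsProbabilityMeasure G]
    (f : S → ℝ) (C : ℝ) (hb : ∀ x, |f x| ≤ C) : |∫ x, f x ∂G| ≤ C := by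
  have h := norm_integral_le_of_norm_le_const (μ := G) (f := f) (C := C)
    (ae_of_all _ fun x => by simpa [Real.norm_eq_abs] using hb x)
  simpa [Real.norm_eq_abs, measure_univ] using h

private lemma integral_empirical {S : Type*} [MeasurableSpace S] (n : ℕ)
    (x : Fin n → S) (f : S → ℝ) (hf : StronglyMeasurable f) :
    ∫ s, f s ∂(empiricalMeasure n x) = (n : ℝ)⁻¹ * ∑ i, f (x i) := by
  have hint : ∀ i : Fin n, Integrable f (Measure.dirac (x i)) := fun i =>
    ⟨hf.aestronglyMeasurable, by
      simp [HasFiniteIntegral, lintegral_dirac' _ hf.measurable.enorm]⟩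
  rw [empiricalMeasure, integral_smul_measure,
    integral_finset_sum_measure (fun i _ => hint i)]
  simp [integral_dirac' f _ hf, ENNReal.toReal_inv]

private lemma sum_dotProduct' {m ι : Type*} [Fintype m] (s : Finset ι) (f : ι → m → ℝ)
    (v : m → ℝ) : ∑ i ∈ s, f i ⬝ᵥ v = (∑ i ∈ s, f i) ⬝ᵥ v := by
  simp only [dotProduct, Finset.sum_apply, Finset.sum_mul]
  exact Finset.sum_comm

private lemma dotProduct_sum' {m ι : Type*} [Fintype m] (s : Finset ι) (v : m → ℝ)
    (f : ι → m → ℝ) : ∑ i ∈ s, v ⬝ᵥ f i = v ⬝ᵥ (∑ i ∈ s, f i) := by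
  simp only [dotProduct, Finset.sum_apply, Finset.mul_sum]
  exact Finset.sum_comm

/-- with P*(x,y) = u*(x)ᵀ(J*)⁻¹u*(y) (u*(x) = (1,u(x)ᵀ)ᵀ,
J* = ∫ u*u*ᵀ dG) and the score-centered kernel
K_{scen(G)}(x,y) = K(x,y) − ∫P*(x,z)K(z,y)dG(z) − ∫K(x,z)P*(z,y)dG(z)
                 + ∬P*(x,z)K(z,w)P*(w,y)dG(z)dG(w),
if the points x_1,…,x_n satisfy the score equation Σ_i u(x_i) = 0, then
Σ_i Σ_j K_{scen(G)}(x_i,x_j) = Σ_i Σ_j K_{cen(G)}(x_i,x_j); equivalently, with F̂ the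
empirical measure, d_K(F̂,G) = ∬ K_{scen(G)} dF̂ dF̂. -/
theorem score_centered_representation {S : Type*} [MeasurableSpace S]
    (G : Measure S) [IsProbabilityMeasure G]
    (K : S → S → ℝ)
    (hKmeas : Measurable (Function.uncurry K))
    (hKbdd : ∃ C : ℝ, ∀ x y, |K x y| ≤ C)
    (hKsymm : ∀ x y, K x y = K y x)
    (p : ℕ) (u : S → Fin p → ℝ)
    (humeas : ∀ i, Measurable fun x => u x i)
    (hubdd : ∃ Cu : ℝ, ∀ x i, |u x i| ≤ Cu)
    (hmean : ∀ i, ∫ x, u x i ∂G = 0)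
    (J : Matrix (Fin p) (Fin p) ℝ)
    (hJ : ∀ i j, J i j = ∫ x, u x i * u x j ∂G)
    (hJinv : IsUnit J.det)
    (Jstar : Matrix (Fin (p + 1)) (Fin (p + 1)) ℝ)
    (hJstar : ∀ i j, Jstar i j = ∫ x, extScore (u x) i * extScore (u x) j ∂G)
    (Pstar : S → S → ℝ)
    (hPstar : ∀ x y, Pstar x y = extScore (u x) ⬝ᵥ (Jstar⁻¹ *ᵥ extScore (u y)))
    (kscen : S → S → ℝ)
    (hkscen : ∀ x y, kscen x y =
      K x y - (∫ z, Pstar x z * K z y ∂G) - (∫ z, K x z * Pstar z y ∂G)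
        + ∫ z, ∫ w, Pstar x z * K z w * Pstar w y ∂G ∂G)
    (n : ℕ) (hn : 0 < n) (x : Fin n → S)
    (hscore : ∀ j, ∑ i, u (x i) j = 0) :
    (∑ i, ∑ j, kscen (x i) (x j) = ∑ i, ∑ j, kcen K G (x i) (x j)) ∧
    quadDist K (empiricalMeasure n x) G
      = ∫ s, ∫ t, kscen s t ∂(empiricalMeasure n x) ∂(empiricalMeasure n x) := by
  classical
  obtain ⟨CK, hCK⟩ := hKbdd
  obtain ⟨Cu, hCu⟩ := hubdd
  have hCu'nn : (0:ℝ) ≤ max 1 Cu := le_trans zero_le_one (le_max_left _ _)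
  have hestar_meas : ∀ k : Fin (p+1), Measurable fun s => extScore (u s) k := by
    intro k
    refine Fin.cases ?_ ?_ k
    · simpa [extScore] using (measurable_const : Measurable fun _ : S => (1:ℝ))
    · intro i; simpa [extScore] using humeas i
  have hestar_bdd : ∀ (s : S) (k : Fin (p+1)), |extScore (u s) k| ≤ max 1 Cu := by
    intro s k
    refine Fin.cases ?_ ?_ k
    · simpa [extScore] using le_max_left (1:ℝ) Cu
    · intro i; simpa [extScore] using le_trans (hCu s i) (le_max_right (1:ℝ) Cu)
  -- structure of Jstar
  have hJstar_col : ∀ i, Jstar i 0 = (Pi.single 0 1 : Fin (p+1) → ℝ) i := by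
    intro i
    refine Fin.cases ?_ ?_ i
    · rw [hJstar]; simp [extScore]
    · intro k
      rw [hJstar]
      simp only [extScore, Fin.cons_succ, Fin.cons_zero, mul_one,
        Pi.single_eq_of_ne (Fin.succ_ne_zero k)]
      exact hmean k
  have hJstar_row0 : ∀ k : Fin p, Jstar 0 k.succ = 0 := by
    intro k
    rw [hJstar]
    simp only [extScore, Fin.cons_succ, Fin.cons_zero, one_mul]
    exact hmean k
  have hsub : Jstar.submatrix Fin.succ Fin.succ = J := by
    ext i j
    rw [Matrix.submatrix_apply, hJstar, hJ]
    simp [extScore]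
  have hdet : Jstar.det = J.det := by
    rw [Matrix.det_succ_row_zero, Finset.sum_eq_single (0 : Fin (p+1))]
    · have h00 : Jstar 0 0 = 1 := by simpa using hJstar_col 0
      simp [h00, Fin.succAbove_zero, hsub]
    · intro j _ hj
      obtain ⟨k, rfl⟩ := Fin.eq_succ_of_ne_zero hj
      simp [hJstar_row0 k]
    · intro h; exact absurd (Finset.mem_univ _) h
  have hJstarUnit : IsUnit Jstar.det := hdet ▸ hJinv
  have hmul_e0 : Jstar *ᵥ (Pi.single 0 1 : Fin (p+1) → ℝ) = (Pi.single 0 1 : Fin (p+1) → ℝ) := by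
    funext i
    rw [Matrix.mulVec_single]
    simpa using hJstar_col i
  have hinv_e0 : Jstar⁻¹ *ᵥ (Pi.single 0 1 : Fin (p+1) → ℝ) = (Pi.single 0 1 : Fin (p+1) → ℝ) := by
    have h : Jstar⁻¹ *ᵥ (Jstar *ᵥ (Pi.single 0 1 : Fin (p+1) → ℝ))
        = Jstar⁻¹ *ᵥ (Pi.single 0 1 : Fin (p+1) → ℝ) := by rw [hmul_e0]
    rw [Matrix.mulVec_mulVec, Matrix.nonsing_inv_mul _ hJstarUnit, Matrix.one_mulVec] at h
    exact h.symm
  have hsymmJ : Jstarᵀ = Jstar := by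
    ext i j
    rw [Matrix.transpose_apply, hJstar, hJstar]
    simp [mul_comm]
  have hinvT : Jstar⁻¹ᵀ = Jstar⁻¹ := by
    rw [Matrix.transpose_nonsing_inv, hsymmJ]
  have hvecMul_e0 : (Pi.single 0 1 : Fin (p+1) → ℝ) ᵥ* Jstar⁻¹ = (Pi.single 0 1 : Fin (p+1) → ℝ) := by
    rw [← hinvT, Matrix.mulVec_transpose] at hinv_e0
    exact hinv_e0
  have hsum_estar : (∑ i, extScore (u (x i))) = (n : ℝ) • (Pi.single 0 1 : Fin (p+1) → ℝ) := by
    funext k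
    rw [Finset.sum_apply]
    refine Fin.cases ?_ ?_ k
    · simp [extScore]
    · intro j
      simp only [extScore, Fin.cons_succ]
      rw [hscore j]
      simp [Pi.single_eq_of_ne (Fin.succ_ne_zero j)]
  have hsumP_left : ∀ z, (∑ i, Pstar (x i) z) = (n : ℝ) := by
    intro z
    calc (∑ i, Pstar (x i) z)
        = (∑ i, extScore (u (x i))) ⬝ᵥ (Jstar⁻¹ *ᵥ extScore (u z)) := by
          rw [← sum_dotProduct']
          exact Finset.sum_congr rfl fun i _ => hPstar _ _
      _ = (n : ℝ) * ((Pi.single 0 1 : Fin (p+1) → ℝ) ⬝ᵥ (Jstar⁻¹ *ᵥ extScore (u z))) := by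
          rw [hsum_estar, smul_dotProduct, smul_eq_mul]
      _ = (n : ℝ) := by
          rw [Matrix.dotProduct_mulVec, hvecMul_e0, single_dotProduct]
          simp [extScore]
  have hsumP_right : ∀ z, (∑ i, Pstar z (x i)) = (n : ℝ) := by
    intro z
    have hmv : Jstar⁻¹ *ᵥ (∑ i, extScore (u (x i))) = ∑ i, Jstar⁻¹ *ᵥ extScore (u (x i)) := by
      funext k
      simp only [Matrix.mulVec, dotProduct, Finset.sum_apply, Finset.mul_sum]
      exact Finset.sum_comm
    calc (∑ i, Pstar z (x i))
        = extScore (u z) ⬝ᵥ (Jstar⁻¹ *ᵥ ∑ i, extScore (u (x i))) := by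
          rw [hmv, ← dotProduct_sum']
          exact Finset.sum_congr rfl fun i _ => hPstar _ _
      _ = (n : ℝ) := by
          rw [hsum_estar, Matrix.mulVec_smul, hinv_e0, dotProduct_smul, smul_eq_mul,
            dotProduct_single]
          simp [extScore]
  -- measurability and boundedness of Pstar
  have hPeq : ∀ a b : S, Pstar a b
      = ∑ k, ∑ l, extScore (u a) k * (Jstar⁻¹ k l * extScore (u b) l) := by
    intro a b
    rw [hPstar]
    simp [dotProduct, Matrix.mulVec, Finset.mul_sum]
  have hPmeas : Measurable (Function.uncurry Pstar) := by
    have h : Function.uncurry Pstar = fun q : S × S =>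
        ∑ k, ∑ l, extScore (u q.1) k * (Jstar⁻¹ k l * extScore (u q.2) l) := by
      funext q; exact hPeq q.1 q.2
    rw [h]
    refine Finset.measurable_sum _ fun k _ => Finset.measurable_sum _ fun l _ => ?_
    exact ((hestar_meas k).comp measurable_fst).mul
      (measurable_const.mul ((hestar_meas l).comp measurable_snd))
  have hPbdd : ∀ a b, |Pstar a b|
      ≤ ∑ k : Fin (p+1), ∑ l : Fin (p+1), |Jstar⁻¹ k l| * (max 1 Cu * max 1 Cu) := by
    intro a b
    rw [hPeq]
    refine le_trans (Finset.abs_sum_le_sum_abs _ _) ?_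
    refine Finset.sum_le_sum fun k _ => le_trans (Finset.abs_sum_le_sum_abs _ _) ?_
    refine Finset.sum_le_sum fun l _ => ?_
    rw [abs_mul, abs_mul, mul_left_comm]
    exact mul_le_mul_of_nonneg_left
      (mul_le_mul (hestar_bdd a k) (hestar_bdd b l) (abs_nonneg _) hCu'nn) (abs_nonneg _)
  set CP : ℝ := ∑ k : Fin (p+1), ∑ l : Fin (p+1), |Jstar⁻¹ k l| * (max 1 Cu * max 1 Cu)
    with hCPdef
  have hPbdd' : ∀ a b, |Pstar a b| ≤ CP := hPbdd
  have s0 : S := x ⟨0, hn⟩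
  have hCPnn : (0:ℝ) ≤ CP := le_trans (abs_nonneg _) (hPbdd' s0 s0)
  have hCKnn : (0:ℝ) ≤ CK := le_trans (abs_nonneg _) (hCK s0 s0)
  -- measurability of slices
  have hK1 : ∀ t, Measurable fun s => K s t := fun t =>
    hKmeas.comp (measurable_id.prodMk measurable_const)
  have hK2 : ∀ s, Measurable fun t => K s t := fun s =>
    hKmeas.comp (measurable_const.prodMk measurable_id)
  have hP1 : ∀ b, Measurable fun z => Pstar z b := fun b =>
    hPmeas.comp (measurable_id.prodMk measurable_const)
  have hP2 : ∀ a, Measurable fun z => Pstar a z := fun a =>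
    hPmeas.comp (measurable_const.prodMk measurable_id)
  have hHmeas : Measurable fun z => ∫ w, K z w ∂G :=
    hKmeas.stronglyMeasurable.integral_prod_right'.measurable
  have hHbdd : ∀ z, |∫ w, K z w ∂G| ≤ CK := fun z => abs_int_le G _ CK fun w => hCK z w
  -- integrability facts
  have hPK_int : ∀ a b : S, Integrable (fun z => Pstar a z * K z b) G := fun a b =>
    bdd_integrable ((hP2 a).mul (hK1 b)) (CP * CK) fun z => by
      rw [abs_mul]; exact mul_le_mul (hPbdd' _ _) (hCK _ _) (abs_nonneg _) hCPnn
  have hKP_int : ∀ a b : S, Integrable (fun z => K a z * Pstar z b) G := fun a b =>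
    bdd_integrable ((hK2 a).mul (hP1 b)) (CK * CP) fun z => by
      rw [abs_mul]; exact mul_le_mul (hCK _ _) (hPbdd' _ _) (abs_nonneg _) hCKnn
  have htriple_bdd : ∀ (a b z w : S), |Pstar a z * K z w * Pstar w b| ≤ CP * CK * CP := by
    intro a b z w
    rw [abs_mul, abs_mul]
    exact mul_le_mul
      (mul_le_mul (hPbdd' _ _) (hCK _ _) (abs_nonneg _) hCPnn) (hPbdd' _ _) (abs_nonneg _)
      (mul_nonneg hCPnn hCKnn)
  have htriple_int : ∀ a z b : S, Integrable (fun w => Pstar a z * K z w * Pstar w b) G := by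
    intro a z b
    exact bdd_integrable ((measurable_const.mul (hK2 z)).mul (hP1 b)) (CP * CK * CP)
      fun w => htriple_bdd a b z w
  have htriple_meas : ∀ a b : S,
      Measurable fun q : S × S => Pstar a q.1 * K q.1 q.2 * Pstar q.2 b := by
    intro a b
    exact ((hPmeas.comp (measurable_const.prodMk measurable_fst)).mul hKmeas).mul
      (hPmeas.comp (measurable_snd.prodMk measurable_const))
  have hDz_meas : ∀ a b : S, Measurable fun z => ∫ w, Pstar a z * K z w * Pstar w b ∂G :=
    fun a b => (htriple_meas a b).stronglyMeasurable.integral_prod_right'.measurable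
  have hDz_bdd : ∀ (a b z : S), |∫ w, Pstar a z * K z w * Pstar w b ∂G| ≤ CP * CK * CP :=
    fun a b z => abs_int_le G _ _ fun w => htriple_bdd a b z w
  have hDz_int : ∀ a b : S, Integrable (fun z => ∫ w, Pstar a z * K z w * Pstar w b ∂G) G :=
    fun a b => bdd_integrable (hDz_meas a b) (CP * CK * CP) (hDz_bdd a b)
  have hPH_int : ∀ a : S, Integrable (fun z => Pstar a z * ∫ w, K z w ∂G) G := fun a =>
    bdd_integrable ((hP2 a).mul hHmeas) (CP * CK) fun z => by
      rw [abs_mul]; exact mul_le_mul (hPbdd' _ _) (hHbdd _) (abs_nonneg _) hCPnn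
  -- the three sum identities
  have hA : ∀ y, (∑ i, ∫ z, Pstar (x i) z * K z y ∂G) = (n:ℝ) * ∫ z, K z y ∂G := by
    intro y
    rw [← integral_finset_sum _ fun i _ => hPK_int (x i) y]
    simp_rw [← Finset.sum_mul, hsumP_left]
    exact integral_const_mul _ _
  have hB : ∀ a, (∑ j, ∫ z, K a z * Pstar z (x j) ∂G) = (n:ℝ) * ∫ z, K a z ∂G := by
    intro a
    rw [← integral_finset_sum _ fun j _ => hKP_int a (x j)]
    simp_rw [← Finset.mul_sum, hsumP_right]
    rw [integral_mul_const, mul_comm]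
  have hDinner : ∀ a z, (∑ j, ∫ w, Pstar a z * K z w * Pstar w (x j) ∂G)
      = (n:ℝ) * (Pstar a z * ∫ w, K z w ∂G) := by
    intro a z
    rw [← integral_finset_sum _ fun j _ => htriple_int a z (x j)]
    simp_rw [← Finset.mul_sum, hsumP_right]
    rw [integral_mul_const, integral_const_mul]
    ring
  have hD : (∑ i, ∑ j, ∫ z, ∫ w, Pstar (x i) z * K z w * Pstar w (x j) ∂G ∂G)
      = (n:ℝ)^2 * ∫ z, ∫ w, K z w ∂G ∂G := by
    calc (∑ i, ∑ j, ∫ z, ∫ w, Pstar (x i) z * K z w * Pstar w (x j) ∂G ∂G)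
        = ∑ i, ∫ z, ∑ j, ∫ w, Pstar (x i) z * K z w * Pstar w (x j) ∂G ∂G := by
          exact Finset.sum_congr rfl fun i _ =>
            (integral_finset_sum _ fun j _ => hDz_int (x i) (x j)).symm
      _ = ∑ i, ∫ z, (n:ℝ) * (Pstar (x i) z * ∫ w, K z w ∂G) ∂G := by
          refine Finset.sum_congr rfl fun i _ => ?_
          exact integral_congr_ae (ae_of_all _ fun z => hDinner (x i) z)
      _ = ∑ i, (n:ℝ) * ∫ z, Pstar (x i) z * (∫ w, K z w ∂G) ∂G := by
          exact Finset.sum_congr rfl fun i _ => integral_const_mul _ _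
      _ = (n:ℝ) * ∫ z, (∑ i, Pstar (x i) z) * (∫ w, K z w ∂G) ∂G := by
          rw [← Finset.mul_sum, ← integral_finset_sum _ fun i _ => hPH_int (x i)]
          simp_rw [Finset.sum_mul]
      _ = (n:ℝ)^2 * ∫ z, ∫ w, K z w ∂G ∂G := by
          simp_rw [hsumP_left]
          rw [integral_const_mul]
          ring
  -- part 1
  have hscen_sum : (∑ i, ∑ j, kscen (x i) (x j))
      = (∑ i, ∑ j, K (x i) (x j)) - (n:ℝ) * (∑ j, ∫ z, K z (x j) ∂G)
        - (n:ℝ) * (∑ i, ∫ z, K (x i) z ∂G) + (n:ℝ)^2 * ∫ z, ∫ w, K z w ∂G ∂G := by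
    have hAA : (∑ i, ∑ j, ∫ z, Pstar (x i) z * K z (x j) ∂G)
        = (n:ℝ) * ∑ j, ∫ z, K z (x j) ∂G := by
      rw [Finset.sum_comm]
      simp_rw [hA]
      rw [← Finset.mul_sum]
    have hBB : (∑ i, ∑ j, ∫ z, K (x i) z * Pstar z (x j) ∂G)
        = (n:ℝ) * ∑ i, ∫ z, K (x i) z ∂G := by
      simp_rw [hB]
      rw [← Finset.mul_sum]
    simp_rw [hkscen]
    simp only [Finset.sum_sub_distrib, Finset.sum_add_distrib]
    rw [hAA, hBB, hD]
  have hcen_sum : (∑ i, ∑ j, kcen K G (x i) (x j))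
      = (∑ i, ∑ j, K (x i) (x j)) - (n:ℝ) * (∑ i, ∫ t, K (x i) t ∂G)
        - (n:ℝ) * (∑ j, ∫ s, K s (x j) ∂G) + (n:ℝ)^2 * ∫ s, ∫ t, K s t ∂G ∂G := by
    simp only [kcen, Finset.sum_sub_distrib, Finset.sum_add_distrib, Finset.sum_const,
      Finset.card_univ, Fintype.card_fin, nsmul_eq_mul, Finset.mul_sum]
    ring
  have part1 : (∑ i, ∑ j, kscen (x i) (x j)) = ∑ i, ∑ j, kcen K G (x i) (x j) := by
    rw [hscen_sum, hcen_sum]; ring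
  refine ⟨part1, ?_⟩
  -- part 2
  have hn' : ((n:ℝ)) ≠ 0 := Nat.cast_ne_zero.mpr hn.ne'
  have hA_meas : Measurable fun q : S × S => ∫ z, Pstar q.1 z * K z q.2 ∂G := by
    have hm : Measurable fun r : (S × S) × S => Pstar r.1.1 r.2 * K r.2 r.1.2 :=
      (hPmeas.comp ((measurable_fst.comp measurable_fst).prodMk measurable_snd)).mul
        (hKmeas.comp (measurable_snd.prodMk (measurable_snd.comp measurable_fst)))
    exact hm.stronglyMeasurable.integral_prod_right'.measurable
  have hB_meas : Measurable fun q : S × S => ∫ z, K q.1 z * Pstar z q.2 ∂G := by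
    have hm : Measurable fun r : (S × S) × S => K r.1.1 r.2 * Pstar r.2 r.1.2 :=
      (hKmeas.comp ((measurable_fst.comp measurable_fst).prodMk measurable_snd)).mul
        (hPmeas.comp (measurable_snd.prodMk (measurable_snd.comp measurable_fst)))
    exact hm.stronglyMeasurable.integral_prod_right'.measurable
  have hD_meas : Measurable fun q : S × S =>
      ∫ z, ∫ w, Pstar q.1 z * K z w * Pstar w q.2 ∂G ∂G := by
    have hm : Measurable fun r : ((S × S) × S) × S =>
        Pstar r.1.1.1 r.1.2 * K r.1.2 r.2 * Pstar r.2 r.1.1.2 := by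
      refine Measurable.mul (Measurable.mul ?_ ?_) ?_
      · exact hPmeas.comp ((measurable_fst.comp (measurable_fst.comp measurable_fst)).prodMk
          (measurable_snd.comp measurable_fst))
      · exact hKmeas.comp ((measurable_snd.comp measurable_fst).prodMk measurable_snd)
      · exact hPmeas.comp (measurable_snd.prodMk
          (measurable_snd.comp (measurable_fst.comp measurable_fst)))
    exact hm.stronglyMeasurable.integral_prod_right'.integral_prod_right'.measurable
  have hkscen_meas : Measurable (Function.uncurry kscen) := by
    have h : Function.uncurry kscen = fun q : S × S =>
        K q.1 q.2 - (∫ z, Pstar q.1 z * K z q.2 ∂G) - (∫ z, K q.1 z * Pstar z q.2 ∂G)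
          + ∫ z, ∫ w, Pstar q.1 z * K z w * Pstar w q.2 ∂G ∂G := by
      funext q; exact hkscen q.1 q.2
    rw [h]
    exact ((hKmeas.sub hA_meas).sub hB_meas).add hD_meas
  have hinner : ∀ s, (∫ t, kscen s t ∂(empiricalMeasure n x))
      = (n:ℝ)⁻¹ * ∑ j, kscen s (x j) := fun s =>
    integral_empirical n x _
      ((hkscen_meas.comp (measurable_const.prodMk measurable_id)).stronglyMeasurable)
  have houter_meas : Measurable fun s => (n:ℝ)⁻¹ * ∑ j, kscen s (x j) :=
    measurable_const.mul (Finset.measurable_sum _ fun j _ =>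
      hkscen_meas.comp (measurable_id.prodMk measurable_const))
  have hRHS : (∫ s, ∫ t, kscen s t ∂(empiricalMeasure n x) ∂(empiricalMeasure n x))
      = (n:ℝ)⁻¹ * ∑ i, ((n:ℝ)⁻¹ * ∑ j, kscen (x i) (x j)) := by
    calc (∫ s, ∫ t, kscen s t ∂(empiricalMeasure n x) ∂(empiricalMeasure n x))
        = ∫ s, ((n:ℝ)⁻¹ * ∑ j, kscen s (x j)) ∂(empiricalMeasure n x) :=
          integral_congr_ae (ae_of_all _ hinner)
      _ = (n:ℝ)⁻¹ * ∑ i, ((n:ℝ)⁻¹ * ∑ j, kscen (x i) (x j)) :=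
          integral_empirical n x _ houter_meas.stronglyMeasurable
  have hKemp : ∀ s, (∫ t, K s t ∂(empiricalMeasure n x)) = (n:ℝ)⁻¹ * ∑ j, K s (x j) :=
    fun s => integral_empirical n x _ (hK2 s).stronglyMeasurable
  have hg_meas : Measurable fun s => (n:ℝ)⁻¹ * (∑ j, K s (x j)) - ∫ t, K s t ∂G :=
    (measurable_const.mul (Finset.measurable_sum _ fun j _ => hK1 (x j))).sub hHmeas
  have hKj_int : ∀ j, Integrable (fun s => K s (x j)) G := fun j =>
    bdd_integrable (hK1 (x j)) CK fun s => hCK s (x j)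
  have hquad : quadDist K (empiricalMeasure n x) G
      = ((n:ℝ)⁻¹ * ∑ i, ((n:ℝ)⁻¹ * (∑ j, K (x i) (x j)) - ∫ t, K (x i) t ∂G))
        - ((n:ℝ)⁻¹ * (∑ j, ∫ s, K s (x j) ∂G) - ∫ s, ∫ t, K s t ∂G ∂G) := by
    have hfun : (fun s => (∫ t, K s t ∂(empiricalMeasure n x)) - ∫ t, K s t ∂G)
        = fun s => (n:ℝ)⁻¹ * (∑ j, K s (x j)) - ∫ t, K s t ∂G := by
      funext s; rw [hKemp s]
    have h1 : Integrable (fun s => (n:ℝ)⁻¹ * ∑ j, K s (x j)) G :=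
      (integrable_finset_sum _ fun j _ => hKj_int j).const_mul _
    have h2 : Integrable (fun s => ∫ t, K s t ∂G) G := bdd_integrable hHmeas CK hHbdd
    rw [quadDist, hfun, integral_empirical n x _ hg_meas.stronglyMeasurable,
      integral_sub h1 h2, integral_const_mul, integral_finset_sum _ fun j _ => hKj_int j]
  rw [hquad, hRHS]
  simp only [Finset.sum_sub_distrib, ← Finset.mul_sum]
  rw [hscen_sum]
  field_simp
  ring
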